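/- Let M : Matrix (Fin m) (Fin n) ℝ have all entries nonnegative. Then the ℓ²→ℓ² operator norm of M (its largest singular value) equals the supremum, over unit vectors x : Fin m → ℝ and y : Fin n → ℝ all of whose entries are nonnegative, of ∑_{i,j} x(i) · M i j · y(j). -/

import Mathlib

/-- The ℓ²→ℓ² operator norm of a real matrix: the operator norm of the induced
continuous linear map between the corresponding Euclidean spaces (i.e. the largest
singular value). -/
noncomputable def l2OpNormReal {m n : ℕ} (M : Matrix (Fin m) (Fin n) ℝ) : ℝ :=
  ‖LinearMap.toContinuousLinearMap (Matrix.toEuclideanLin M)‖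

open Matrix RealInnerProductSpace

theorem l2OpNorm_eq_sSup_nonneg_unit_vectors
    {m n : ℕ} (M : Matrix (Fin m) (Fin n) ℝ) (hM : ∀ i j, 0 ≤ M i j) :
    l2OpNormReal M =
      sSup {s : ℝ | ∃ (x : Fin m → ℝ) (y : Fin n → ℝ),
        (∑ i, x i ^ 2 = 1) ∧ (∑ j, y j ^ 2 = 1) ∧
        (∀ i, 0 ≤ x i) ∧ (∀ j, 0 ≤ y j) ∧
        s = ∑ i, ∑ j, x i * M i j * y j} := by
  classical
  set T := LinearMap.toContinuousLinearMap (Matrix.toEuclideanLin M) with hTdef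
  set S := {s : ℝ | ∃ (x : Fin m → ℝ) (y : Fin n → ℝ),
        (∑ i, x i ^ 2 = 1) ∧ (∑ j, y j ^ 2 = 1) ∧
        (∀ i, 0 ≤ x i) ∧ (∀ j, 0 ≤ y j) ∧
        s = ∑ i, ∑ j, x i * M i j * y j} with hSdef
  show ‖T‖ = sSup S
  have hTapp : ∀ (v : EuclideanSpace ℝ (Fin n)) (i : Fin m),
      T v i = M.mulVec v i := fun v i => rfl
  have sqrt_congr : ∀ (f g : Fin m → ℝ), (∀ i, f i = g i) →
      Real.sqrt (∑ i, f i ^ 2) = Real.sqrt (∑ i, g i ^ 2) := fun f g h => by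
    congr 1; exact Finset.sum_congr rfl fun i _ => by rw [h i]
  have hnormE : ∀ (x : EuclideanSpace ℝ (Fin m)), ‖x‖ = Real.sqrt (∑ i, x i ^ 2) := by
    intro x; rw [EuclideanSpace.norm_eq]; simp [sq_abs]
  have hnormE' : ∀ (x : EuclideanSpace ℝ (Fin n)), ‖x‖ = Real.sqrt (∑ i, x i ^ 2) := by
    intro x; rw [EuclideanSpace.norm_eq]; simp [sq_abs]
  -- upper bound: every element of S is ≤ ‖T‖
  have hub : ∀ s ∈ S, s ≤ ‖T‖ := by
    rintro s ⟨x, y, hx1, hy1, hx0, hy0, rfl⟩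
    set x' : EuclideanSpace ℝ (Fin m) := (WithLp.equiv 2 _).symm x with hx'
    set y' : EuclideanSpace ℝ (Fin n) := (WithLp.equiv 2 _).symm y with hy'
    have hxn : ‖x'‖ = 1 := by
      rw [hnormE]; simp only [hx', WithLp.equiv_symm_apply, PiLp.toLp_apply]; rw [hx1, Real.sqrt_one]
    have hyn : ‖y'‖ = 1 := by
      rw [hnormE']; simp only [hy', WithLp.equiv_symm_apply, PiLp.toLp_apply]; rw [hy1, Real.sqrt_one]
    have hs : ∑ i, ∑ j, x i * M i j * y j = ⟪x', T y'⟫ := by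
      rw [PiLp.inner_apply]
      simp only [RCLike.inner_apply, conj_trivial]
      refine Finset.sum_congr rfl fun i _ => ?_
      have : T y' i = ∑ j, M i j * y j := rfl
      rw [this, Finset.sum_mul]
      refine Finset.sum_congr rfl fun j _ => ?_
      have hxi : x' i = x i := rfl
      rw [hxi]; ring
    rw [hs]
    calc ⟪x', T y'⟫ ≤ ‖x'‖ * ‖T y'‖ := real_inner_le_norm _ _
      _ ≤ 1 * (‖T‖ * ‖y'‖) := by
          rw [hxn, one_mul, one_mul]; exact T.le_opNorm y'
      _ = ‖T‖ := by rw [hyn, one_mul, mul_one]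
  by_cases hmn : m = 0 ∨ n = 0
  · -- degenerate case: S is empty and T = 0
    have hSe : S = ∅ := by
      ext s
      simp only [hSdef, Set.mem_setOf_eq, Set.mem_empty_iff_false, iff_false]
      rintro ⟨x, y, hx1, hy1, -⟩
      rcases hmn with h | h
      · subst h; simp at hx1
      · subst h; simp at hy1
    have hT0 : ‖T‖ = 0 := by
      rw [norm_eq_zero]
      ext v i
      rcases hmn with h | h
      · exact absurd i.2 (by omega)
      · have hv : v = 0 := by
          ext j; exact absurd j.2 (by omega)
        rw [hv]; simp
    rw [hSe, Real.sSup_empty, hT0]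
  push_neg at hmn
  obtain ⟨hm, hn⟩ := hmn
  have hm' : 0 < m := Nat.pos_of_ne_zero hm
  have hn' : 0 < n := Nat.pos_of_ne_zero hn
  -- S is nonempty
  have hne : Set.Nonempty S := by
    refine ⟨_, (fun i => if i = ⟨0, hm'⟩ then (1:ℝ) else 0),
      (fun j => if j = ⟨0, hn'⟩ then (1:ℝ) else 0), ?_, ?_, ?_, ?_, rfl⟩
    · simp [apply_ite (· ^ 2)]
    · simp [apply_ite (· ^ 2)]
    · intro i; positivity
    · intro j; positivity
  have hbdd : BddAbove S := ⟨‖T‖, hub⟩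
  have hsup0 : 0 ≤ sSup S := by
    obtain ⟨s, hs⟩ := hne
    refine le_trans ?_ (le_csSup hbdd hs)
    obtain ⟨x, y, -, -, hx0, hy0, rfl⟩ := hs
    exact Finset.sum_nonneg fun i _ => Finset.sum_nonneg fun j _ =>
      mul_nonneg (mul_nonneg (hx0 i) (hM i j)) (hy0 j)
  -- key lemma: for nonneg unit y, ‖T y‖ ≤ sSup S
  have hkey : ∀ (y : Fin n → ℝ), (∑ j, y j ^ 2 = 1) → (∀ j, 0 ≤ y j) →
      ‖T ((WithLp.equiv 2 _).symm y)‖ ≤ sSup S := by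
    intro y hy1 hy0
    set z : Fin m → ℝ := M.mulVec y with hz
    have hz0 : ∀ i, 0 ≤ z i := fun i =>
      show (0:ℝ) ≤ ∑ j, M i j * y j from
        Finset.sum_nonneg fun j _ => mul_nonneg (hM i j) (hy0 j)
    have hnz : ‖T ((WithLp.equiv 2 _).symm y)‖ = Real.sqrt (∑ i, z i ^ 2) := by
      rw [hnormE]; exact sqrt_congr _ _ fun i => rfl
    set c := Real.sqrt (∑ i, z i ^ 2) with hc
    by_cases hcz : c = 0
    · rw [hnz, hcz]; exact hsup0
    have hc0 : 0 < c := lt_of_le_of_ne (Real.sqrt_nonneg _) (Ne.symm hcz)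
    have hcsq : c ^ 2 = ∑ i, z i ^ 2 :=
      Real.sq_sqrt (Finset.sum_nonneg fun i _ => sq_nonneg _)
    rw [hnz]
    refine le_csSup hbdd ⟨fun i => z i / c, y, ?_, hy1, ?_, hy0, ?_⟩
    · simp only [div_pow]
      rw [← Finset.sum_div, ← hcsq, div_self (by positivity)]
    · intro i; exact div_nonneg (hz0 i) hc0.le
    · have h1 : ∀ i, ∑ j, z i / c * M i j * y j = z i ^ 2 / c := by
        intro i
        have : ∑ j, z i / c * M i j * y j = z i / c * ∑ j, M i j * y j := by
          rw [Finset.mul_sum]; exact Finset.sum_congr rfl fun j _ => by ring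
        rw [this]
        have : ∑ j, M i j * y j = z i := rfl
        rw [this]; ring
      rw [Finset.sum_congr rfl fun i _ => h1 i, ← Finset.sum_div, ← hcsq]
      field_simp
  -- lower bound: ‖T‖ ≤ sSup S
  refine le_antisymm (T.opNorm_le_bound hsup0 fun v => ?_) (Real.sSup_le hub (norm_nonneg T))
  by_cases hv : v = 0
  · simp [hv]
  have ha : 0 < ‖v‖ := norm_pos_iff.2 hv
  set a := ‖v‖ with hadef
  have hasq : a ^ 2 = ∑ j, v j ^ 2 := by
    rw [hadef, hnormE']
    exact Real.sq_sqrt (Finset.sum_nonneg fun j _ => sq_nonneg _)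
  set w : Fin n → ℝ := fun j => |v j| / a with hw
  have hw1 : ∑ j, w j ^ 2 = 1 := by
    simp only [hw, div_pow, sq_abs]
    rw [← Finset.sum_div, ← hasq, div_self (by positivity)]
  have hw0 : ∀ j, 0 ≤ w j := fun j => div_nonneg (abs_nonneg _) ha.le
  have hcomp : ∀ i, (M.mulVec v i) ^ 2 ≤ (a * M.mulVec (w) i) ^ 2 := by
    intro i
    have h2 : a * M.mulVec w i = ∑ j, M i j * |v j| := by
      rw [Matrix.mulVec, dotProduct, Finset.mul_sum]
      refine Finset.sum_congr rfl fun j _ => ?_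
      rw [hw]; field_simp
    have h3 : |∑ j, M i j * v j| ≤ ∑ j, M i j * |v j| := by
      refine le_trans (Finset.abs_sum_le_sum_abs _ _) ?_
      refine Finset.sum_le_sum fun j _ => ?_
      rw [abs_mul, abs_of_nonneg (hM i j)]
    rw [h2, ← sq_abs (M.mulVec v i)]
    exact pow_le_pow_left₀ (abs_nonneg _) h3 2
  have hTv : ‖T v‖ = Real.sqrt (∑ i, (M.mulVec v i) ^ 2) := by
    rw [hnormE]; exact sqrt_congr _ _ fun i => rfl
  have hTw : ‖T ((WithLp.equiv 2 _).symm w)‖ = Real.sqrt (∑ i, (M.mulVec w i) ^ 2) := by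
    rw [hnormE]; exact sqrt_congr _ _ fun i => rfl
  calc ‖T v‖ = Real.sqrt (∑ i, (M.mulVec v i) ^ 2) := hTv
    _ ≤ Real.sqrt (∑ i, (a * M.mulVec w i) ^ 2) :=
        Real.sqrt_le_sqrt (Finset.sum_le_sum fun i _ => hcomp i)
    _ = a * Real.sqrt (∑ i, (M.mulVec w i) ^ 2) := by
        simp only [mul_pow, ← Finset.mul_sum]
        rw [Real.sqrt_mul (sq_nonneg a), Real.sqrt_sq ha.le]
    _ = a * ‖T ((WithLp.equiv 2 _).symm w)‖ := by rw [hTw]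
    _ ≤ a * sSup S := by
        exact mul_le_mul_of_nonneg_left (hkey w hw1 hw0) ha.le
    _ = sSup S * ‖v‖ := by rw [mul_comm]
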